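/- Assume additionally that ∫_ℝ K(x) dx = 1 and |x|^{2+ε} K(x) → 0 as |x| → ∞ for some ε > 1/2, and that the bandwidths are b_n = k_n Δ_n with k_n·√Δ_n → θ ∈ (0, ∞). Then for every compact interval [a, c] ⊂ (0, T) there exist C > 0 and N ∈ ℕ such that for all n ≥ N: sup_{τ ∈ [a,c]} |Δ_n · Σ_{i=1}^n K_{b_n}(t_{i−1} − τ) − 1| ≤ C · Δ_n/b_n. -/

import Mathlib

open MeasureTheory Filter Topology

noncomputable def kb (K : ℝ → ℝ) (b x : ℝ) : ℝ := K (x / b) / b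

lemma ftc_finset (f f' : ℝ → ℝ) (E : Finset ℝ) :
    ∀ a b : ℝ, a ≤ b → ContinuousOn f (Set.Icc a b) →
    (∀ x ∈ Set.Ioo a b, x ∉ E → HasDerivAt f (f' x) x) →
    IntervalIntegrable f' MeasureTheory.volume a b →
    ∫ y in a..b, f' y = f b - f a := by
  classical
  induction E using Finset.induction_on with
  | empty =>
      intro a b hab hc hd hi
      exact intervalIntegral.integral_eq_sub_of_hasDeriv_right_of_le hab hc
        (fun x hx => (hd x hx (by simp)).hasDerivWithinAt) hi
  | @insert e E' he ih =>
      intro a b hab hc hd hi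
      by_cases hm : e ∈ Set.Ioo a b
      · have hae : a ≤ e := hm.1.le
        have heb : e ≤ b := hm.2.le
        have hsub1 : Set.uIcc a e ⊆ Set.uIcc a b := by
          rw [Set.uIcc_of_le hae, Set.uIcc_of_le hab]
          exact Set.Icc_subset_Icc le_rfl heb
        have hsub2 : Set.uIcc e b ⊆ Set.uIcc a b := by
          rw [Set.uIcc_of_le heb, Set.uIcc_of_le hab]
          exact Set.Icc_subset_Icc hae le_rfl
        have h1 : ∫ y in a..e, f' y = f e - f a := by
          refine ih a e hae (hc.mono (Set.Icc_subset_Icc le_rfl heb)) ?_ (hi.mono_set hsub1)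
          intro x hx hxE
          refine hd x ⟨hx.1, hx.2.trans hm.2⟩ ?_
          simp only [Finset.mem_insert, not_or]
          exact ⟨ne_of_lt hx.2, hxE⟩
        have h2 : ∫ y in e..b, f' y = f b - f e := by
          refine ih e b heb (hc.mono (Set.Icc_subset_Icc hae le_rfl)) ?_ (hi.mono_set hsub2)
          intro x hx hxE
          refine hd x ⟨hm.1.trans hx.1, hx.2⟩ ?_
          simp only [Finset.mem_insert, not_or]
          exact ⟨(ne_of_lt hx.1).symm, hxE⟩
        rw [← intervalIntegral.integral_add_adjacent_intervals (hi.mono_set hsub1)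
          (hi.mono_set hsub2), h1, h2]
        ring
      · refine ih a b hab hc ?_ hi
        intro x hx hxE
        refine hd x hx ?_
        simp only [Finset.mem_insert, not_or]
        exact ⟨fun h => hm (h ▸ hx), hxE⟩

set_option maxHeartbeats 4000000 in
theorem stmt_3
    (T : ℝ) (hT : 0 < T)
    (K K' : ℝ → ℝ)
    (A B : EReal) (hA : A ≤ 0) (hB : 0 ≤ B)
    (hKbdd : ∃ M : ℝ, ∀ x : ℝ, |K x| ≤ M)
    (hsupp : ∀ x : ℝ, ((x : EReal) ≤ A ∨ B ≤ (x : EReal)) → K x = 0)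
    (hLip : ∃ C : NNReal,
      LipschitzOnWith C K {x : ℝ | A < (x : EReal) ∧ (x : EReal) < B})
    (hdiff : ∃ E : Finset ℝ,
      ∀ x ∈ {x : ℝ | A < (x : EReal) ∧ (x : EReal) < B} \ (E : Set ℝ),
        HasDerivAt K (K' x) x)
    (hKint : Integrable K)
    (hK'int : Integrable K')
    (hK'BV : BoundedVariationOn K' Set.univ)
    (hKone : ∫ x : ℝ, K x = 1)
    (ε : ℝ) (hε : 1 / 2 < ε)
    (hdecay : Tendsto (fun x : ℝ => |x| ^ (2 + ε) * K x) (Filter.cocompact ℝ) (𝓝 0))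
    (k : ℕ → ℕ) (hk : ∀ n, 0 < k n)
    (θ : ℝ) (hθpos : 0 < θ)
    (hθ : Tendsto (fun n : ℕ => (k n : ℝ) * Real.sqrt (T / n)) atTop (𝓝 θ))
    (a c : ℝ) (ha : 0 < a) (hac : a ≤ c) (hc : c < T) :
    ∃ C > (0:ℝ), ∃ N : ℕ, ∀ n ≥ N, ∀ τ ∈ Set.Icc a c,
      |(T / n) *
          (∑ i ∈ Finset.range n,
            kb K ((k n : ℝ) * (T / n)) ((i : ℝ) * (T / n) - τ)) - 1| ≤
        C * (T / n) / ((k n : ℝ) * (T / n)) := by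
  classical
  obtain ⟨M, hM⟩ := hKbdd
  obtain ⟨L, hL⟩ := hLip
  obtain ⟨E, hE⟩ := hdiff
  have hM0 : 0 ≤ M := le_trans (abs_nonneg _) (hM 0)
  have hε0 : (0:ℝ) ≤ ε := by linarith
  -- extract decay radius R
  have hcc : ∀ᶠ x : ℝ in cocompact ℝ, |(|x| ^ (2 + ε) * K x)| < 1 := by
    have h := hdecay.eventually (Metric.ball_mem_nhds (0:ℝ) one_pos)
    refine h.mono fun x hx => ?_
    rwa [Real.dist_eq, sub_zero] at hx
  rw [cocompact_eq_atBot_atTop, eventually_sup] at hcc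
  obtain ⟨hbot, htop⟩ := hcc
  rw [eventually_atBot] at hbot
  rw [eventually_atTop] at htop
  obtain ⟨R2, hR2⟩ := hbot
  obtain ⟨R1, hR1⟩ := htop
  set R : ℝ := max 1 (max R1 (-R2)) with hRdef
  have hR1' : (1:ℝ) ≤ R := le_max_left _ _
  have hR0 : (0:ℝ) < R := lt_of_lt_of_le one_pos hR1'
  have hKdec : ∀ x : ℝ, R ≤ |x| → |K x| ≤ |x| ^ (-(2 + ε)) := by
    intro x hx
    have hx0 : (0:ℝ) < |x| := lt_of_lt_of_le hR0 hx
    have h1 : |(|x| ^ (2 + ε) * K x)| < 1 := by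
      rcases le_or_gt 0 x with h | h
      · refine hR1 x ?_
        have hxx : |x| = x := abs_of_nonneg h
        have : R1 ≤ R := le_trans (le_max_left _ _) (le_max_right _ _)
        linarith [hx.trans_eq hxx]
      · refine hR2 x ?_
        have hxx : |x| = -x := abs_of_neg h
        have : -R2 ≤ R := le_trans (le_max_right _ _) (le_max_right _ _)
        nlinarith [hx]
    have h2 : |x| ^ (2 + ε) * |K x| ≤ 1 := by
      rw [abs_mul, abs_of_nonneg (Real.rpow_nonneg (abs_nonneg x) _)] at h1
      exact h1.le
    have hp : (0:ℝ) < |x| ^ (2 + ε) := Real.rpow_pos_of_pos hx0 _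
    have h3 : |K x| ≤ 1 / |x| ^ (2 + ε) := by
      rw [le_div_iff₀ hp]
      nlinarith [h2]
    rw [Real.rpow_neg (abs_nonneg x), ← one_div]
    exact h3
  -- constants
  set d : ℝ := min a (T - c) with hddef
  have hd0 : 0 < d := lt_min ha (by linarith)
  set η : ℝ := min (min a 1) ((T - c) / (1 + T)) with hηdef
  have hη0 : 0 < η := lt_min (lt_min ha one_pos) (div_pos (by linarith) (by linarith))
  set η' : ℝ := η ^ (-(2 + ε)) with hη'def
  have hη'0 : 0 < η' := Real.rpow_pos_of_pos hη0 _
  set V : ℝ := ∫ x, |K' x| with hVdef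
  have hV0 : 0 ≤ V := integral_nonneg fun x => abs_nonneg _
  set C : ℝ := V + 4 * M + 2 * θ ^ 2 * (Real.pi * η') + 1 with hCdef
  have hC0 : 0 < C := by
    have hπ : (0:ℝ) ≤ 2 * θ ^ 2 * (Real.pi * η') := by positivity
    rw [hCdef]
    linarith [hV0, hM0]
  -- choose N
  have hΔten : Tendsto (fun n : ℕ => T / (n:ℝ)) atTop (𝓝 0) :=
    tendsto_const_div_atTop_nhds_zero_nat T
  have hsq : Tendsto (fun n : ℕ => Real.sqrt (T / (n:ℝ))) atTop (𝓝 0) := by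
    rw [← Real.sqrt_zero]
    exact (Real.continuous_sqrt.tendsto 0).comp hΔten
  have hbten : Tendsto (fun n : ℕ => (k n : ℝ) * (T / (n:ℝ))) atTop (𝓝 0) := by
    have h := hθ.mul hsq
    rw [mul_zero] at h
    refine Tendsto.congr ?_ h
    intro n
    have hΔnn : 0 ≤ T / (n:ℝ) := div_nonneg hT.le (Nat.cast_nonneg n)
    rw [mul_assoc, Real.mul_self_sqrt hΔnn]
  have hb2ten : Tendsto (fun n : ℕ => ((k n : ℝ) * Real.sqrt (T / (n:ℝ))) ^ 2)
      atTop (𝓝 (θ ^ 2)) := by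
    have h := hθ.mul hθ
    simp only [← pow_two] at h
    exact h
  have hE1 : ∀ᶠ n : ℕ in atTop, (k n : ℝ) * (T / (n:ℝ)) ≤ min 1 (d / R) :=
    hbten.eventually_le_const (lt_min one_pos (div_pos hd0 hR0))
  have hE2 : ∀ᶠ n : ℕ in atTop, ((k n : ℝ) * Real.sqrt (T / (n:ℝ))) ^ 2 ≤ 2 * θ ^ 2 :=
    hb2ten.eventually_le_const (by nlinarith)
  have hE3 : ∀ᶠ n : ℕ in atTop, 1 ≤ n := eventually_ge_atTop 1
  obtain ⟨N, hN⟩ := eventually_atTop.1 (hE1.and (hE2.and hE3))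
  refine ⟨C, hC0, N, ?_⟩
  intro n hn τ hτ
  obtain ⟨hb_small, hb2, h1n⟩ := hN n hn
  have hτa : a ≤ τ := hτ.1
  have hτc : τ ≤ c := hτ.2
  have hn0 : (0:ℝ) < (n:ℝ) := by
    have : (0:ℕ) < n := h1n
    exact_mod_cast this
  set Δ : ℝ := T / (n:ℝ) with hΔdef
  have hΔ0 : 0 < Δ := div_pos hT hn0
  set b : ℝ := (k n : ℝ) * Δ with hbdef
  have hk0 : (0:ℝ) < (k n : ℝ) := by exact_mod_cast hk n
  have hb0 : 0 < b := mul_pos hk0 hΔ0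
  have hb1 : b ≤ 1 := le_trans hb_small (min_le_left _ _)
  have hbdR : b ≤ d / R := le_trans hb_small (min_le_right _ _)
  have hRb : R * b ≤ d := by
    have := (le_div_iff₀ hR0).1 hbdR
    linarith [this]
  have hbsq : b ^ 2 ≤ 2 * θ ^ 2 * Δ := by
    have h1 : ((k n : ℝ) * Real.sqrt Δ) ^ 2 = (k n : ℝ) ^ 2 * Δ := by
      rw [mul_pow, Real.sq_sqrt hΔ0.le]
    have h2 : (k n : ℝ) ^ 2 * Δ ≤ 2 * θ ^ 2 := by rw [← h1]; exact hb2
    have hb2' : b ^ 2 = ((k n : ℝ) ^ 2 * Δ) * Δ := by rw [hbdef]; ring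
    rw [hb2']
    exact mul_le_mul_of_nonneg_right h2 hΔ0.le
  set g : ℝ → ℝ := fun x => K ((x - τ) / b) / b with hgdef
  have hgkb : ∀ y : ℝ, kb K b (y - τ) = g y := fun y => rfl
  have hgoal : (∑ i ∈ Finset.range n, kb K b ((i:ℝ) * Δ - τ))
      = ∑ i ∈ Finset.range n, g ((i:ℝ) * Δ) :=
    Finset.sum_congr rfl fun i _ => hgkb _
  rw [hgoal]
  -- integrability and total integral of g
  have hgint : Integrable g := by
    have h1 : Integrable fun x : ℝ => K (x / b) := hKint.comp_div hb0.ne'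
    have h2 : Integrable fun x : ℝ => K ((x - τ) / b) := h1.comp_sub_right τ
    exact h2.div_const b
  have hg1 : ∫ x, g x = 1 := by
    have h1 : (∫ x : ℝ, K ((x - τ) / b)) = ∫ x : ℝ, K (x / b) :=
      integral_sub_right_eq_self (fun x => K (x / b)) τ
    have h2 : (∫ x : ℝ, K (x / b)) = b := by
      rw [MeasureTheory.Measure.integral_comp_div K b, hKone, abs_of_pos hb0, smul_eq_mul, mul_one]
    simp only [hgdef]
    rw [integral_div, h1, h2, div_self hb0.ne']
  -- grid in K-coordinates
  set u : ℕ → ℝ := fun i => ((i:ℝ) * Δ - τ) / b with hudef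
  have humono : ∀ i j : ℕ, i ≤ j → u i ≤ u j := by
    intro i j hij
    have hij' : (i:ℝ) * Δ - τ ≤ (j:ℝ) * Δ - τ :=
      sub_le_sub_right (mul_le_mul_of_nonneg_right (Nat.cast_le.2 hij) hΔ0.le) τ
    simp only [hudef]
    exact (div_le_div_iff_of_pos_right hb0).2 hij'
  have hK'ii : ∀ p q : ℝ, IntervalIntegrable K' volume p q := fun p q =>
    hK'int.intervalIntegrable
  have habsK'ii : ∀ p q : ℝ, IntervalIntegrable (fun y => |K' y|) volume p q := fun p q =>
    hK'int.abs.intervalIntegrable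
  have hInt_nonneg : ∀ i : ℕ, 0 ≤ ∫ y in u i..u (i+1), |K' y| := by
    intro i
    exact intervalIntegral.integral_nonneg (humono i (i+1) (Nat.le_succ i))
      (fun x _ => abs_nonneg _)
  have hstep : ∀ (i : ℕ) (β : ℝ), 0 ≤ β →
      (∀ x ∈ Set.Icc ((i:ℝ) * Δ) (((i:ℝ) + 1) * Δ), |g ((i:ℝ) * Δ) - g x| ≤ β) →
      |Δ * g ((i:ℝ) * Δ) - ∫ x in ((i:ℝ) * Δ)..(((i:ℝ) + 1) * Δ), g x| ≤ Δ * β := by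
    intro i β hβ hbd
    have hle : (i:ℝ) * Δ ≤ ((i:ℝ) + 1) * Δ :=
      mul_le_mul_of_nonneg_right (by linarith) hΔ0.le
    have hii : IntervalIntegrable g volume ((i:ℝ) * Δ) (((i:ℝ) + 1) * Δ) :=
      hgint.intervalIntegrable
    have hconst : Δ * g ((i:ℝ) * Δ)
        = ∫ _x in ((i:ℝ) * Δ)..(((i:ℝ) + 1) * Δ), g ((i:ℝ) * Δ) := by
      rw [intervalIntegral.integral_const, smul_eq_mul]
      ring
    rw [hconst, ← intervalIntegral.integral_sub intervalIntegrable_const hii]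
    calc |∫ x in ((i:ℝ) * Δ)..(((i:ℝ) + 1) * Δ), (g ((i:ℝ) * Δ) - g x)|
        ≤ ∫ x in ((i:ℝ) * Δ)..(((i:ℝ) + 1) * Δ), |g ((i:ℝ) * Δ) - g x| :=
          intervalIntegral.abs_integral_le_integral_abs hle
      _ ≤ ∫ _x in ((i:ℝ) * Δ)..(((i:ℝ) + 1) * Δ), β := by
          exact intervalIntegral.integral_mono_on hle
            ((intervalIntegrable_const.sub hii).abs) intervalIntegrable_const hbd
      _ = Δ * β := by rw [intervalIntegral.integral_const, smul_eq_mul]; ring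
  have hwmem : ∀ i : ℕ, ∀ x ∈ Set.Icc ((i:ℝ) * Δ) (((i:ℝ) + 1) * Δ),
      (x - τ) / b ∈ Set.Icc (u i) (u (i + 1)) := by
    intro i x hx
    have h1 : (i:ℝ) * Δ - τ ≤ x - τ := by linarith [hx.1]
    have h2 : x - τ ≤ ((i:ℝ) + 1) * Δ - τ := by linarith [hx.2]
    constructor
    · simp only [hudef]
      exact (div_le_div_iff_of_pos_right hb0).2 h1
    · simp only [hudef]
      push_cast
      exact (div_le_div_iff_of_pos_right hb0).2 h2
  set P : ℕ → Prop := fun i => (((u i : ℝ) : EReal) ≤ A ∧ A < ((u (i+1) : ℝ) : EReal)) ∨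
      (((u i : ℝ) : EReal) < B ∧ B ≤ ((u (i+1) : ℝ) : EReal)) with hPdef
  have key : ∀ i ∈ Finset.range n,
      |Δ * g ((i:ℝ) * Δ) - ∫ x in ((i:ℝ) * Δ)..(((i:ℝ) + 1) * Δ), g x| ≤
        (if P i then 2 * M * Δ / b else 0) + (Δ / b) * ∫ y in u i..u (i+1), |K' y| := by
    intro i _
    have hif0 : 0 ≤ (if P i then 2 * M * Δ / b else 0) := by
      split
      · positivity
      · exact le_rfl
    have hle : (i:ℝ) * Δ ≤ ((i:ℝ) + 1) * Δ :=
      mul_le_mul_of_nonneg_right (by linarith) hΔ0.le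
    by_cases h0 : ((u (i+1) : ℝ) : EReal) ≤ A ∨ B ≤ ((u i : ℝ) : EReal)
    · -- g vanishes on the whole interval
      have hz : ∀ x ∈ Set.Icc ((i:ℝ) * Δ) (((i:ℝ) + 1) * Δ), g x = 0 := by
        intro x hx
        obtain ⟨hw1, hw2⟩ := hwmem i x hx
        have hK0 : K ((x - τ) / b) = 0 := by
          apply hsupp
          rcases h0 with h | h
          · exact Or.inl (le_trans (EReal.coe_le_coe_iff.2 hw2) h)
          · exact Or.inr (le_trans h (EReal.coe_le_coe_iff.2 hw1))
        simp only [hgdef, hK0, zero_div]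
      have hz0 : g ((i:ℝ) * Δ) = 0 := hz _ ⟨le_rfl, hle⟩
      have hzint : ∫ x in ((i:ℝ) * Δ)..(((i:ℝ) + 1) * Δ), g x = 0 := by
        rw [intervalIntegral.integral_congr (g := fun _ => (0:ℝ))
          (fun x hx => hz x (by rwa [Set.uIcc_of_le hle] at hx))]
        simp
      rw [hz0, hzint]
      simp only [mul_zero, sub_zero, abs_zero]
      exact add_nonneg hif0 (mul_nonneg (by positivity) (hInt_nonneg i))
    · by_cases hin : (A < ((u i : ℝ) : EReal) ∧ ((u (i+1) : ℝ) : EReal) < B)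
      · -- interval inside (A, B)
        have hKsub : Set.Icc (u i) (u (i+1)) ⊆ {x : ℝ | A < (x : EReal) ∧ (x : EReal) < B} := by
          intro y hy
          exact ⟨lt_of_lt_of_le hin.1 (EReal.coe_le_coe_iff.2 hy.1),
            lt_of_le_of_lt (EReal.coe_le_coe_iff.2 hy.2) hin.2⟩
        have hcont : ContinuousOn K (Set.Icc (u i) (u (i+1))) := hL.continuousOn.mono hKsub
        have hbdK : ∀ v ∈ Set.Icc (u i) (u (i+1)),
            |K v - K (u i)| ≤ ∫ y in u i..u (i+1), |K' y| := by
          intro v hv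
          have hftc : ∫ y in u i..v, K' y = K v - K (u i) := by
            apply ftc_finset K K' E (u i) v hv.1
              (hcont.mono (Set.Icc_subset_Icc le_rfl hv.2)) ?_ (hK'ii _ _)
            intro x hx hxE
            exact hE x ⟨hKsub ⟨hx.1.le, hx.2.le.trans hv.2⟩,
              fun hh => hxE (Finset.mem_coe.1 hh)⟩
          rw [← hftc]
          calc |∫ y in u i..v, K' y| ≤ ∫ y in u i..v, |K' y| :=
              intervalIntegral.abs_integral_le_integral_abs hv.1
            _ ≤ ∫ y in u i..u (i+1), |K' y| := by
              rw [← intervalIntegral.integral_add_adjacent_intervals (habsK'ii (u i) v)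
                (habsK'ii v (u (i+1)))]
              have h2 : 0 ≤ ∫ y in v..u (i+1), |K' y| :=
                intervalIntegral.integral_nonneg hv.2 (fun x _ => abs_nonneg _)
              linarith
        refine le_trans (hstep i ((1 / b) * ∫ y in u i..u (i+1), |K' y|)
          (mul_nonneg (by positivity) (hInt_nonneg i)) ?_) ?_
        · intro x hx
          have hw := hwmem i x hx
          have hgd : g ((i:ℝ) * Δ) - g x = (K (u i) - K ((x - τ) / b)) / b := by
            simp only [hgdef]
            rw [div_sub_div_same]
          rw [hgd, abs_div, abs_of_pos hb0]
          have hbd2 := hbdK ((x - τ) / b) hw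
          rw [abs_sub_comm] at hbd2
          calc |K (u i) - K ((x - τ) / b)| / b
              ≤ (∫ y in u i..u (i+1), |K' y|) / b := by gcongr
            _ = (1 / b) * ∫ y in u i..u (i+1), |K' y| := by ring
        · have heq : Δ * ((1 / b) * ∫ y in u i..u (i+1), |K' y|)
              = (Δ / b) * ∫ y in u i..u (i+1), |K' y| := by ring
          rw [heq]
          linarith [hif0]
      · -- crossing interval
        have hcp : P i := by
          push_neg at h0 hin
          by_cases hA' : A < ((u i : ℝ) : EReal)
          · exact Or.inr ⟨h0.2, hin hA'⟩
          · exact Or.inl ⟨not_lt.1 hA', h0.1⟩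
        rw [if_pos hcp]
        have hgb : ∀ y : ℝ, |g y| ≤ M / b := by
          intro y
          have hgy : g y = K ((y - τ) / b) / b := rfl
          rw [hgy, abs_div, abs_of_pos hb0]
          gcongr
          exact hM _
        refine le_trans (hstep i (2 * M / b) (by positivity) ?_) ?_
        · intro x hx
          calc |g ((i:ℝ) * Δ) - g x| ≤ |g ((i:ℝ) * Δ)| + |g x| := abs_sub _ _
            _ ≤ M / b + M / b := add_le_add (hgb _) (hgb _)
            _ = 2 * M / b := by ring
        · have heq : Δ * (2 * M / b) = 2 * M * Δ / b := by ring
          rw [heq]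
          have h2 : 0 ≤ (Δ / b) * ∫ y in u i..u (i+1), |K' y| :=
            mul_nonneg (by positivity) (hInt_nonneg i)
          linarith
  -- sum the interval integrals
  have hsum_int : ∑ i ∈ Finset.range n, ∫ x in ((i:ℝ) * Δ)..(((i:ℝ) + 1) * Δ), g x
      = ∫ x in (0:ℝ)..T, g x := by
    have h := intervalIntegral.sum_integral_adjacent_intervals
      (a := fun i : ℕ => (i:ℝ) * Δ) (f := g) (μ := volume) (n := n)
      (fun _ _ => hgint.intervalIntegrable)
    have h0 : ((0:ℕ):ℝ) * Δ = 0 := by simp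
    have hnT : ((n:ℕ):ℝ) * Δ = T := by
      rw [hΔdef]
      field_simp
    beta_reduce at h
    rw [h0, hnT] at h
    rw [← h]
    refine Finset.sum_congr rfl fun i _ => ?_
    congr 1
    push_cast
    ring
  have habs1 : |Δ * (∑ i ∈ Finset.range n, g ((i:ℝ) * Δ)) - ∫ x in (0:ℝ)..T, g x|
      ≤ 4 * M * Δ / b + (Δ / b) * V := by
    rw [← hsum_int, Finset.mul_sum, ← Finset.sum_sub_distrib]
    refine le_trans (Finset.abs_sum_le_sum_abs _ _) ?_
    refine le_trans (Finset.sum_le_sum key) ?_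
    rw [Finset.sum_add_distrib]
    have hpart1 : ∑ i ∈ Finset.range n, (if P i then 2 * M * Δ / b else 0)
        ≤ 4 * M * Δ / b := by
      rw [← Finset.sum_filter]
      rw [Finset.sum_const, nsmul_eq_mul]
      have hcard : (((Finset.range n).filter P).card : ℝ) ≤ 2 := by
        have huniq1 : ((Finset.range n).filter
            (fun i => ((u i : ℝ) : EReal) ≤ A ∧ A < ((u (i+1) : ℝ) : EReal))).card ≤ 1 := by
          rw [Finset.card_le_one]
          intro i hi j hj
          simp only [Finset.mem_filter] at hi hj
          by_contra hne
          have hkey : ∀ p q : ℕ, p < q →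
              (((u p : ℝ) : EReal) ≤ A ∧ A < ((u (p+1) : ℝ) : EReal)) →
              (((u q : ℝ) : EReal) ≤ A ∧ A < ((u (q+1) : ℝ) : EReal)) → False := by
            intro p q hpq hp hq
            have h1 : u (p+1) ≤ u q := humono _ _ hpq
            exact absurd (lt_of_lt_of_le hp.2 (le_trans (EReal.coe_le_coe_iff.2 h1) hq.1))
              (lt_irrefl _)
          rcases Nat.lt_or_ge i j with h | h
          · exact hkey i j h hi.2 hj.2
          · exact hkey j i (lt_of_le_of_ne h fun hh => hne hh.symm) hj.2 hi.2
        have huniq2 : ((Finset.range n).filter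
            (fun i => ((u i : ℝ) : EReal) < B ∧ B ≤ ((u (i+1) : ℝ) : EReal))).card ≤ 1 := by
          rw [Finset.card_le_one]
          intro i hi j hj
          simp only [Finset.mem_filter] at hi hj
          by_contra hne
          have hkey : ∀ p q : ℕ, p < q →
              (((u p : ℝ) : EReal) < B ∧ B ≤ ((u (p+1) : ℝ) : EReal)) →
              (((u q : ℝ) : EReal) < B ∧ B ≤ ((u (q+1) : ℝ) : EReal)) → False := by
            intro p q hpq hp hq
            have h1 : u (p+1) ≤ u q := humono _ _ hpq
            exact absurd (lt_of_le_of_lt (le_trans hp.2 (EReal.coe_le_coe_iff.2 h1)) hq.1)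
              (lt_irrefl _)
          rcases Nat.lt_or_ge i j with h | h
          · exact hkey i j h hi.2 hj.2
          · exact hkey j i (lt_of_le_of_ne h fun hh => hne hh.symm) hj.2 hi.2
        have hsubP : (Finset.range n).filter P ⊆
            ((Finset.range n).filter
              (fun i => ((u i : ℝ) : EReal) ≤ A ∧ A < ((u (i+1) : ℝ) : EReal))) ∪
            ((Finset.range n).filter
              (fun i => ((u i : ℝ) : EReal) < B ∧ B ≤ ((u (i+1) : ℝ) : EReal))) := by
          rw [← Finset.filter_or]
        have hcard2 : ((Finset.range n).filter P).card ≤ 2 := by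
          refine le_trans (Finset.card_le_card hsubP) ?_
          refine le_trans (Finset.card_union_le _ _) ?_
          omega
        exact_mod_cast hcard2
      have hpos : (0:ℝ) ≤ 2 * M * Δ / b := by positivity
      calc (((Finset.range n).filter P).card : ℝ) * (2 * M * Δ / b)
          ≤ 2 * (2 * M * Δ / b) := mul_le_mul_of_nonneg_right hcard hpos
        _ = 4 * M * Δ / b := by ring
    have hpart2 : ∑ i ∈ Finset.range n, (Δ / b) * ∫ y in u i..u (i+1), |K' y|
        ≤ (Δ / b) * V := by
      rw [← Finset.mul_sum]
      have hsum2 : ∑ i ∈ Finset.range n, ∫ y in u i..u (i+1), |K' y|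
          = ∫ y in (u 0)..(u n), |K' y| :=
        intervalIntegral.sum_integral_adjacent_intervals (fun _ _ => habsK'ii _ _)
      rw [hsum2]
      refine mul_le_mul_of_nonneg_left ?_ (by positivity)
      rw [intervalIntegral.integral_of_le (humono 0 n (Nat.zero_le n))]
      exact setIntegral_le_integral hK'int.abs (ae_of_all _ fun x => abs_nonneg _)
    linarith
  -- tail estimate
  have habs2 : |(∫ x in (0:ℝ)..T, g x) - 1| ≤ 2 * θ ^ 2 * (Real.pi * η') * (Δ / b) := by
    clear key hstep hwmem hInt_nonneg humono hsum_int habs1 hgoal hgkb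
    clear hPdef P hudef u hK'ii habsK'ii hM hL hE hdecay hθ
    have hIoc : ∫ x in (0:ℝ)..T, g x = ∫ x in Set.Ioc 0 T, g x :=
      intervalIntegral.integral_of_le hT.le
    have hsplit : (∫ x in Set.Ioc (0:ℝ) T, g x) + ∫ x in (Set.Ioc (0:ℝ) T)ᶜ, g x = 1 := by
      rw [← hg1]
      exact integral_add_compl measurableSet_Ioc hgint
    have hDpt : ∀ x ∈ (Set.Ioc (0:ℝ) T)ᶜ, |g x| ≤ b ^ (1 + ε) * η' * (1 + x ^ 2)⁻¹ := by
      intro x hx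
      have hx' : x ≤ 0 ∨ T < x := by
        simp only [Set.mem_compl_iff, Set.mem_Ioc, not_and_or, not_lt, not_le] at hx
        tauto
      have hηa : η ≤ a := le_trans (min_le_left _ _) (min_le_left _ _)
      have hη1 : η ≤ 1 := le_trans (min_le_left _ _) (min_le_right _ _)
      have hηT : η ≤ (T - c) / (1 + T) := min_le_right _ _
      have hxτ : η * (1 + |x|) ≤ |x - τ| ∧ d ≤ |x - τ| := by
        rcases hx' with h | h
        · have habsd : |x - τ| = τ - x := by
            rw [abs_of_nonpos (by linarith)]; ring
          have habsx : |x| = -x := abs_of_nonpos h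
          constructor
          · rw [habsd, habsx]
            have hmul : η * (-x) ≤ 1 * (-x) :=
              mul_le_mul_of_nonneg_right hη1 (neg_nonneg.2 h)
            have hexp : η * (1 + -x) = η * 1 + η * (-x) := by ring
            rw [hexp]
            linarith [hmul]
          · rw [habsd]
            have : d ≤ a := min_le_left _ _
            linarith
        · have habsd : |x - τ| = x - τ := abs_of_nonneg (by linarith)
          have habsx : |x| = x := abs_of_nonneg (by linarith)
          have hTpos : (0:ℝ) < 1 + T := by linarith
          have hx2 : (T - c) / (1 + T) * (1 + x) ≤ x - c := by
            rw [div_mul_eq_mul_div, div_le_iff₀ hTpos]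
            have hfac : (x - c) * (1 + T) - (T - c) * (1 + x) = (x - T) * (1 + c) := by ring
            have hge : 0 ≤ (x - T) * (1 + c) := mul_nonneg (by linarith) (by linarith)
            linarith
          constructor
          · rw [habsd, habsx]
            calc η * (1 + x) ≤ (T - c) / (1 + T) * (1 + x) :=
                mul_le_mul_of_nonneg_right hηT (by linarith)
              _ ≤ x - c := hx2
              _ ≤ x - τ := by linarith
          · rw [habsd]
            have : d ≤ T - c := min_le_right _ _
            linarith
      have hposxτ : 0 < |x - τ| := lt_of_lt_of_le hd0 hxτ.2
      have hR_le : R ≤ |(x - τ) / b| := by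
        rw [abs_div, abs_of_pos hb0, le_div_iff₀ hb0]
        calc R * b ≤ d := hRb
          _ ≤ |x - τ| := hxτ.2
      have hKb : |K ((x - τ) / b)| ≤ |(x - τ) / b| ^ (-(2 + ε)) := hKdec _ hR_le
      have hgx : |g x| = |K ((x - τ) / b)| / b := by
        have hgy : g x = K ((x - τ) / b) / b := rfl
        rw [hgy, abs_div, abs_of_pos hb0]
      have h1x : (0:ℝ) < 1 + |x| := by positivity
      have hstep1 : |(x - τ) / b| ^ (-(2 + ε)) ≤ (η * (1 + |x|) / b) ^ (-(2 + ε)) := by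
        apply Real.rpow_le_rpow_of_nonpos
        · positivity
        · rw [abs_div, abs_of_pos hb0]
          gcongr
          exact hxτ.1
        · linarith
      have hstep2 : (η * (1 + |x|) / b) ^ (-(2 + ε))
          = b ^ (2 + ε) * (η ^ (2 + ε))⁻¹ * ((1 + |x|) ^ (2 + ε))⁻¹ := by
        rw [Real.rpow_neg (by positivity), Real.div_rpow (by positivity) hb0.le,
          Real.mul_rpow hη0.le h1x.le, inv_div, div_eq_mul_inv, mul_inv]
        ring
      have hstep3 : ((1 + |x|) ^ (2 + ε))⁻¹ ≤ (1 + x ^ 2)⁻¹ := by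
        have hone : (1:ℝ) ≤ 1 + |x| := by linarith [abs_nonneg x]
        have ha1 : (1 + x ^ 2) ≤ (1 + |x|) ^ (2 + ε) := by
          calc (1 + x ^ 2) ≤ (1 + |x|) ^ 2 := by
                have hsq1 : (1 + |x|) ^ 2 = 1 + 2 * |x| + |x| ^ 2 := by ring
                rw [sq_abs] at hsq1
                rw [hsq1]
                linarith [abs_nonneg x]
            _ = (1 + |x|) ^ ((2:ℕ):ℝ) := by rw [Real.rpow_natCast]
            _ ≤ (1 + |x|) ^ (2 + ε) :=
                Real.rpow_le_rpow_of_exponent_le hone (by push_cast; linarith)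
        have hpos1 : (0:ℝ) < 1 + x ^ 2 := by positivity
        exact inv_anti₀ hpos1 ha1
      have hηinv : (η ^ (2 + ε))⁻¹ = η' := by
        rw [hη'def, Real.rpow_neg hη0.le]
      have hbb : b ^ (2 + ε) / b = b ^ (1 + ε) := by
        rw [eq_comm, eq_div_iff hb0.ne']
        calc b ^ (1 + ε) * b = b ^ (1 + ε) * b ^ (1:ℝ) := by rw [Real.rpow_one]
          _ = b ^ ((1 + ε) + 1) := (Real.rpow_add hb0 _ _).symm
          _ = b ^ (2 + ε) := by ring_nf
      calc |g x| = |K ((x - τ) / b)| / b := hgx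
        _ ≤ |(x - τ) / b| ^ (-(2 + ε)) / b := by gcongr
        _ ≤ (η * (1 + |x|) / b) ^ (-(2 + ε)) / b := by gcongr
        _ = (b ^ (2 + ε) * (η ^ (2 + ε))⁻¹ * ((1 + |x|) ^ (2 + ε))⁻¹) / b := by rw [hstep2]
        _ ≤ (b ^ (2 + ε) * (η ^ (2 + ε))⁻¹ * (1 + x ^ 2)⁻¹) / b := by
            gcongr
        _ = (b ^ (2 + ε) / b) * (η ^ (2 + ε))⁻¹ * (1 + x ^ 2)⁻¹ := by ring
        _ = b ^ (1 + ε) * η' * (1 + x ^ 2)⁻¹ := by rw [hbb, hηinv]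
    have hDint : Integrable (fun x : ℝ => b ^ (1 + ε) * η' * (1 + x ^ 2)⁻¹) :=
      integrable_inv_one_add_sq.const_mul _
    have habs2' : |∫ x in (Set.Ioc (0:ℝ) T)ᶜ, g x| ≤ b ^ (1 + ε) * η' * Real.pi := by
      calc |∫ x in (Set.Ioc (0:ℝ) T)ᶜ, g x| ≤ ∫ x in (Set.Ioc (0:ℝ) T)ᶜ, |g x| := by
            simpa [Real.norm_eq_abs] using
              MeasureTheory.norm_integral_le_integral_norm
                (μ := volume.restrict (Set.Ioc (0:ℝ) T)ᶜ) g
        _ ≤ ∫ x in (Set.Ioc (0:ℝ) T)ᶜ, b ^ (1 + ε) * η' * (1 + x ^ 2)⁻¹ :=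
            setIntegral_mono_on hgint.abs.integrableOn hDint.integrableOn
              measurableSet_Ioc.compl hDpt
        _ ≤ ∫ x : ℝ, b ^ (1 + ε) * η' * (1 + x ^ 2)⁻¹ :=
            setIntegral_le_integral hDint (ae_of_all _ fun x => by positivity)
        _ = b ^ (1 + ε) * η' * Real.pi := by
            rw [MeasureTheory.integral_const_mul, integral_univ_inv_one_add_sq]
    have hbfin : b ^ (1 + ε) ≤ 2 * θ ^ 2 * (Δ / b) := by
      have hbe : b ^ ε ≤ 1 := Real.rpow_le_one hb0.le hb1 hε0
      have hsplit2 : b ^ (1 + ε) * b = b ^ 2 * b ^ ε := by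
        calc b ^ (1 + ε) * b = b ^ (1 + ε) * b ^ (1:ℝ) := by rw [Real.rpow_one]
          _ = b ^ ((1 + ε) + 1) := (Real.rpow_add hb0 _ _).symm
          _ = b ^ ((2:ℝ) + ε) := by ring_nf
          _ = b ^ (2:ℝ) * b ^ ε := Real.rpow_add hb0 2 ε
          _ = b ^ 2 * b ^ ε := by rw [Real.rpow_two]
      have h1 : b ^ (1 + ε) * b ≤ 2 * θ ^ 2 * Δ := by
        rw [hsplit2]
        calc b ^ 2 * b ^ ε ≤ b ^ 2 * 1 :=
            mul_le_mul_of_nonneg_left hbe (sq_nonneg b)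
          _ = b ^ 2 := mul_one _
          _ ≤ 2 * θ ^ 2 * Δ := hbsq
      have heq2 : 2 * θ ^ 2 * (Δ / b) = 2 * θ ^ 2 * Δ / b := by ring
      rw [heq2, le_div_iff₀ hb0]
      exact h1
    have heq : (∫ x in (0:ℝ)..T, g x) - 1 = -∫ x in (Set.Ioc (0:ℝ) T)ᶜ, g x := by
      rw [hIoc]
      linarith [hsplit]
    rw [heq, abs_neg]
    calc |∫ x in (Set.Ioc (0:ℝ) T)ᶜ, g x| ≤ b ^ (1 + ε) * η' * Real.pi := habs2'
      _ ≤ (2 * θ ^ 2 * (Δ / b)) * η' * Real.pi := by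
          exact mul_le_mul_of_nonneg_right
            (mul_le_mul_of_nonneg_right hbfin hη'0.le) Real.pi_pos.le
      _ = 2 * θ ^ 2 * (Real.pi * η') * (Δ / b) := by ring
  -- conclusion
  calc |Δ * (∑ i ∈ Finset.range n, g ((i:ℝ) * Δ)) - 1|
      ≤ |Δ * (∑ i ∈ Finset.range n, g ((i:ℝ) * Δ)) - ∫ x in (0:ℝ)..T, g x|
        + |(∫ x in (0:ℝ)..T, g x) - 1| := abs_sub_le _ _ _
    _ ≤ (4 * M * Δ / b + (Δ / b) * V) + 2 * θ ^ 2 * (Real.pi * η') * (Δ / b) :=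
        add_le_add habs1 habs2
    _ ≤ C * Δ / b := by
        have hΔb : 0 ≤ Δ / b := by positivity
        have hkey2 : C * Δ / b
            = (4 * M * Δ / b + (Δ / b) * V + 2 * θ ^ 2 * (Real.pi * η') * (Δ / b)) + Δ / b := by
          rw [hCdef]; ring
        rw [hkey2]
        linarith
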